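/- Under Mallows' model with a single sample (n=1), for any alternative a and any 0<α<1: if there exists a level-α UMP test for H₀ = ℒ(𝒜)∖L_{a≻others} vs H₁ = L_{a≻others}, then there exist K ∈ ℝ and Γ ∈ [0,1] such that the Borda-score threshold test f̄ defined by f̄(V)=1 if Borda_a(V)>K, f̄(V)=0 if Borda_a(V)<K, and f̄(V)=Γ if Borda_a(V)=K has Size(f̄) ≤ α over H₀ and is a level-α UMP test for H₀ vs H₁. -/

import Mathlib

namespace Voting

open Finset

section Generic

variable {S Θ : Type*} [Fintype S] [Fintype Θ]

/-- `Size π f θ` : the probability that test `f` rejects when the ground truth is `θ`. -/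
noncomputable def Size (π : Θ → S → ℝ) (f : S → ℝ) (θ : Θ) : ℝ :=
  ∑ P, π θ P * f P

/-- `Power π f θ` : the power of test `f` at parameter `θ`. -/
noncomputable def Power (π : Θ → S → ℝ) (f : S → ℝ) (θ : Θ) : ℝ :=
  ∑ P, π θ P * f P

/-- A (randomized) test is a critical function with values in `[0,1]`. -/
def IsTest (f : S → ℝ) : Prop := ∀ P, 0 ≤ f P ∧ f P ≤ 1

/-- `Size(f) ≤ α` over the null hypothesis `H0`. -/
def SizeLe (π : Θ → S → ℝ) (H0 : Set Θ) (f : S → ℝ) (α : ℝ) : Prop :=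
  ∀ h0 ∈ H0, Size π f h0 ≤ α

/-- `Size(f) = α` over the null hypothesis `H0` (the max over `H0` equals `α`). -/
def SizeEq (π : Θ → S → ℝ) (H0 : Set Θ) (f : S → ℝ) (α : ℝ) : Prop :=
  SizeLe π H0 f α ∧ ∃ h0 ∈ H0, Size π f h0 = α

/-- `f` is a level-`α` most powerful test for `H0` vs the simple alternative `h1`. -/
def IsMostPowerful (π : Θ → S → ℝ) (H0 : Set Θ) (h1 : Θ) (α : ℝ) (f : S → ℝ) : Prop :=
  IsTest f ∧ SizeLe π H0 f α ∧
    ∀ g : S → ℝ, IsTest g → SizeLe π H0 g α → Power π g h1 ≤ Power π f h1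

/-- `f` is a level-`α` uniformly most powerful test for `H0` vs `H1`. -/
def IsUMP (π : Θ → S → ℝ) (H0 H1 : Set Θ) (α : ℝ) (f : S → ℝ) : Prop :=
  ∀ h1 ∈ H1, IsMostPowerful π H0 h1 α f

end Generic

/-- A ranking over `m` alternatives: `V a` is the position of alternative `a`
(smaller position = more preferred), i.e. `a ≻_V b ↔ V a < V b`. -/
abbrev Ranking (m : ℕ) := Equiv.Perm (Fin m)

/-- Kendall-tau distance: the number of (unordered) pairs on which `V` and `W` disagree. -/
def KT {m : ℕ} (V W : Ranking m) : ℕ :=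
  (Finset.univ.filter (fun p : Fin m × Fin m => V p.1 < V p.2 ∧ W p.2 < W p.1)).card

/-- Mallows' single-sample probability of `V` given ground truth `W` and dispersion `φ`. -/
noncomputable def mallows1 {m : ℕ} (φ : ℝ) (W V : Ranking m) : ℝ :=
  φ ^ KT V W / ∑ U : Ranking m, φ ^ KT U W

/-- Mallows' model with `n` i.i.d. samples. -/
noncomputable def mallows {m : ℕ} (φ : ℝ) (n : ℕ) :
    Ranking m → (Fin n → Ranking m) → ℝ :=
  fun W P => ∏ i, mallows1 φ W (P i)

/-- `L_{a≻others}` : rankings in which `a` is ranked at the top. -/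
def Ltop {m : ℕ} (a : Fin m) : Set (Ranking m) := {V | ∀ b, b ≠ a → V a < V b}

/-- `L_{others≻a}` : rankings in which `a` is ranked at the bottom. -/
def Lbot {m : ℕ} (a : Fin m) : Set (Ranking m) := {V | ∀ b, b ≠ a → V b < V a}

/-- `w_P(b≻a)` : the weighted-majority-graph weight on the edge `b → a` of profile `P`. -/
def wpair {m n : ℕ} (P : Fin n → Ranking m) (b a : Fin m) : ℤ :=
  ((Finset.univ.filter (fun i => P i b < P i a)).card : ℤ) -
    ((Finset.univ.filter (fun i => P i a < P i b)).card : ℤ)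

/-- `w_P(B≻a) = Σ_{b∈B} w_P(b≻a)`. -/
def wset {m n : ℕ} (P : Fin n → Ranking m) (B : Finset (Fin m)) (a : Fin m) : ℤ :=
  ∑ b ∈ B, wpair P b a

/-- The threshold test on the statistic `w_P(B≻a)` with threshold `K`/randomization `Γ`. -/
noncomputable def wTest {m : ℕ} (n : ℕ) (B : Finset (Fin m)) (a : Fin m) (K Γ : ℝ) :
    (Fin n → Ranking m) → ℝ :=
  fun P =>
    if K < ((wset P B a : ℤ) : ℝ) then 1
    else if ((wset P B a : ℤ) : ℝ) < K then 0
    else Γ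

/-- The Borda score of `a` in `V`: the number of alternatives ranked below `a`. -/
def Borda {m : ℕ} (a : Fin m) (V : Ranking m) : ℕ :=
  (Finset.univ.filter (fun b => V a < V b)).card


/-- The Borda-score threshold test. -/
noncomputable def bordaTest {m : ℕ} (a : Fin m) (K Γ : ℝ) : Ranking m → ℝ :=
  fun V =>
    if K < (Borda a V : ℝ) then 1
    else if (Borda a V : ℝ) < K then 0
    else Γ

section Stmt17Aux

variable {m : ℕ}

lemma KT_trans (τ V W : Ranking m) : KT (τ.trans V) (τ.trans W) = KT V W := by
  unfold KT
  apply Finset.card_nbij' (i := fun p => (τ p.1, τ p.2)) (j := fun p => (τ.symm p.1, τ.symm p.2))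
  · intro p hp; simp only [mem_coe, mem_filter, mem_univ, true_and] at hp ⊢; simpa using hp
  · intro p hp; simp only [mem_coe, mem_filter, mem_univ, true_and] at hp ⊢; simpa using hp
  · intro p hp; simp
  · intro p hp; simp

lemma KT_untrans (τ V W : Ranking m) : KT V (τ.trans W) = KT (τ.symm.trans V) W := by
  have := KT_trans τ (τ.symm.trans V) W
  rw [← Equiv.trans_assoc, Equiv.self_trans_symm, Equiv.refl_trans] at this
  exact this

lemma swap_lt_iff {i j u v : Fin m} (hij : (i:ℕ)+1 = j) (h1 : ¬(u = i ∧ v = j))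
    (h2 : ¬(u = j ∧ v = i)) : (Equiv.swap i j u < Equiv.swap i j v ↔ u < v) := by
  rw [Equiv.swap_apply_def, Equiv.swap_apply_def]
  split_ifs <;> simp only [Fin.lt_def, ← Fin.val_eq_val, not_and] at * <;> omega

lemma kt_swap (V W : Ranking m) {i j : Fin m} (hij : (i:ℕ)+1 = j) :
    (if W (V.symm j) < W (V.symm i) then KT (V.trans (Equiv.swap i j)) W + 1 = KT V W
     else KT (V.trans (Equiv.swap i j)) W = KT V W + 1) := by
  classical
  set x := V.symm i with hx
  set y := V.symm j with hy
  have hVx : V x = i := V.apply_symm_apply i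
  have hVy : V y = j := V.apply_symm_apply j
  have hijne : i ≠ j := fun h => by subst h; omega
  have hxy : x ≠ y := fun h => hijne (by rw [← hVx, ← hVy, h])
  have hilt : i < j := Fin.lt_def.mpr (by omega)
  have hWxy : W x ≠ W y := fun h => hxy (W.injective h)
  set D : Finset (Fin m × Fin m) := {(x,y), (y,x)} with hD
  have hpairne : ((x,y) : Fin m × Fin m) ≠ (y,x) :=
    fun h => hxy (congrArg Prod.fst h)
  have hsplit : ∀ (Q : Fin m × Fin m → Prop) [DecidablePred Q],
      (univ.filter Q).card = ((univ \ D).filter Q).card + (D.filter Q).card := by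
    intro Q _
    rw [← Finset.card_union_of_disjoint (Finset.disjoint_filter_filter Finset.sdiff_disjoint),
      ← Finset.filter_union, Finset.sdiff_union_of_subset (Finset.subset_univ D)]
  have hKT' := hsplit (fun p : Fin m × Fin m =>
    (V.trans (Equiv.swap i j)) p.1 < (V.trans (Equiv.swap i j)) p.2 ∧ W p.2 < W p.1)
  have hKT := hsplit (fun p : Fin m × Fin m => V p.1 < V p.2 ∧ W p.2 < W p.1)
  have hagree : ((univ \ D).filter (fun p : Fin m × Fin m =>
      (V.trans (Equiv.swap i j)) p.1 < (V.trans (Equiv.swap i j)) p.2 ∧ W p.2 < W p.1))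
      = ((univ \ D).filter (fun p : Fin m × Fin m => V p.1 < V p.2 ∧ W p.2 < W p.1)) := by
    apply Finset.filter_congr
    intro p hp
    simp only [Finset.mem_sdiff, hD, Finset.mem_insert, Finset.mem_singleton, not_or] at hp
    have h1 : ¬(V p.1 = i ∧ V p.2 = j) := by
      rintro ⟨e1, e2⟩
      exact hp.2.1 (Prod.ext ((Equiv.eq_symm_apply V).mpr e1) ((Equiv.eq_symm_apply V).mpr e2))
    have h2 : ¬(V p.1 = j ∧ V p.2 = i) := by
      rintro ⟨e1, e2⟩
      exact hp.2.2 (Prod.ext ((Equiv.eq_symm_apply V).mpr e1) ((Equiv.eq_symm_apply V).mpr e2))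
    simp only [Equiv.trans_apply, eq_iff_iff]
    rw [swap_lt_iff hij h1 h2]
  have hcardD : (D.filter (fun p : Fin m × Fin m => V p.1 < V p.2 ∧ W p.2 < W p.1)).card
      = if W y < W x then 1 else 0 := by
    rw [hD, Finset.filter_insert, Finset.filter_singleton]
    simp only [hVx, hVy, hilt, not_lt.mpr hilt.le, false_and, if_false, true_and]
    split_ifs <;> simp
  have hcardD' : (D.filter (fun p : Fin m × Fin m =>
      (V.trans (Equiv.swap i j)) p.1 < (V.trans (Equiv.swap i j)) p.2 ∧ W p.2 < W p.1)).card
      = if W x < W y then 1 else 0 := by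
    rw [hD, Finset.filter_insert, Finset.filter_singleton]
    simp only [Equiv.trans_apply, hVx, hVy, Equiv.swap_apply_left, Equiv.swap_apply_right,
      hilt, not_lt.mpr hilt.le, false_and, if_false, true_and]
    split_ifs <;> simp
  unfold KT
  rw [hKT', hKT, hagree, hcardD, hcardD']
  by_cases hW : W y < W x
  · rw [if_pos hW, if_pos hW, if_neg (lt_asymm hW)]
  · rw [if_neg hW, if_neg hW, if_pos (lt_of_le_of_ne (not_lt.mp hW) hWxy)]

lemma kt_swap_pow (φ : ℝ) (V W : Ranking m) {i j : Fin m} (hij : (i:ℕ)+1 = j) :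
    φ * φ ^ KT (V.trans (Equiv.swap i j)) W
      = φ ^ KT V W * (if W (V.symm j) < W (V.symm i) then 1 else φ^2) := by
  have h := kt_swap V W hij
  split_ifs at h ⊢ with hc
  · rw [mul_one, ← h, pow_succ]; ring
  · rw [h, pow_succ, pow_succ]; ring

noncomputable def Spos (φ : ℝ) {m : ℕ} (a : Fin m) (W : Ranking m) (k : ℕ) : ℝ :=
  ∑ V ∈ univ.filter (fun V : Ranking m => (V a : ℕ) = k), φ ^ KT V W

lemma ltop_iff (a : Fin m) (W : Ranking m) : W ∈ Ltop a ↔ (W a : ℕ) = 0 := by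
  constructor
  · intro h
    by_contra h0
    have hb : W (W.symm ⟨0, a.pos⟩) = ⟨0, a.pos⟩ := W.apply_symm_apply _
    have hne : W.symm ⟨0, a.pos⟩ ≠ a := by
      intro e; rw [e] at hb; exact h0 (by rw [hb])
    have hlt := h _ hne
    rw [hb] at hlt
    have := Fin.lt_def.mp hlt
    simp at this
  · intro h b hb
    have : W b ≠ W a := fun e => hb (W.injective e)
    have : (W b : ℕ) ≠ (W a : ℕ) := fun e => this (Fin.val_eq_val _ _ |>.mp e)
    exact Fin.lt_def.mpr (by omega)

lemma spos_nonneg {φ : ℝ} (hφ0 : 0 ≤ φ) (a : Fin m) (W : Ranking m) (k : ℕ) :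
    0 ≤ Spos φ a W k :=
  Finset.sum_nonneg fun _ _ => pow_nonneg hφ0 _

lemma spos_reindex (φ : ℝ) (a : Fin m) (W : Ranking m) {k : ℕ} (hk : k + 1 < m) :
    Spos φ a W (k+1) = ∑ V ∈ univ.filter (fun V : Ranking m => (V a : ℕ) = k),
      φ ^ KT (V.trans (Equiv.swap ⟨k, by omega⟩ ⟨k+1, hk⟩)) W := by
  set i : Fin m := ⟨k, by omega⟩
  set j : Fin m := ⟨k+1, hk⟩
  apply Finset.sum_nbij' (i := fun V : Ranking m => V.trans (Equiv.swap i j))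
    (j := fun V : Ranking m => V.trans (Equiv.swap i j))
  · intro V hV
    simp only [mem_filter, mem_univ, true_and] at hV ⊢
    have : V a = j := by rw [← Fin.val_eq_val]; exact hV
    simp [Equiv.trans_apply, this, Equiv.swap_apply_right, i]
  · intro V hV
    simp only [mem_filter, mem_univ, true_and] at hV ⊢
    have : V a = i := by rw [← Fin.val_eq_val]; exact hV
    simp [Equiv.trans_apply, this, Equiv.swap_apply_left, j]
  · intro V _; simp [Equiv.trans_assoc]
  · intro V _; simp [Equiv.trans_assoc]
  · intro V _; simp [Equiv.trans_assoc]

lemma spos_succ_ge {φ : ℝ} (hφ0 : 0 < φ) (hφ1 : φ ≤ 1) (a : Fin m) (W : Ranking m)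
    {k : ℕ} (hk : k + 1 < m) : φ * Spos φ a W k ≤ Spos φ a W (k+1) := by
  rw [spos_reindex φ a W hk, Spos, Finset.mul_sum]
  apply Finset.sum_le_sum
  intro V hV
  have h := kt_swap_pow φ V W (i := ⟨k, by omega⟩) (j := ⟨k+1, hk⟩) (by simp)
  rw [← mul_le_mul_iff_right₀ hφ0, h]
  have h1 : (0:ℝ) ≤ φ ^ KT V W := pow_nonneg hφ0.le _
  split_ifs
  · nlinarith [mul_le_mul_of_nonneg_right (show φ*φ ≤ (1:ℝ) by nlinarith) h1]
  · exact le_of_eq (by ring)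

lemma spos_succ_eq {φ : ℝ} (hφ0 : 0 < φ) (a : Fin m) (W : Ranking m) (hW : W ∈ Ltop a)
    {k : ℕ} (hk : k + 1 < m) : Spos φ a W (k+1) = φ * Spos φ a W k := by
  rw [spos_reindex φ a W hk, Spos, Finset.mul_sum]
  apply Finset.sum_congr rfl
  intro V hV
  have h := kt_swap_pow φ V W (i := ⟨k, by omega⟩) (j := ⟨k+1, hk⟩) (by simp)
  simp only [mem_filter, mem_univ, true_and] at hV
  have hVa : V a = (⟨k, by omega⟩ : Fin m) := by rw [← Fin.val_eq_val]; exact hV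
  have hsymm : V.symm (⟨k, by omega⟩ : Fin m) = a := (Equiv.symm_apply_eq V).mpr hVa.symm
  have hne : V.symm (⟨k+1, hk⟩ : Fin m) ≠ a := by
    intro e
    have : V a = (⟨k+1, hk⟩ : Fin m) := by rw [← e, Equiv.apply_symm_apply]
    rw [hVa] at this
    simp [Fin.ext_iff] at this
  have hcond : ¬ (W (V.symm (⟨k+1, hk⟩ : Fin m)) < W (V.symm (⟨k, by omega⟩ : Fin m))) := by
    rw [hsymm]
    exact lt_asymm (hW _ hne)
  rw [if_neg hcond] at h
  have h2 : φ * φ ^ KT (V.trans (Equiv.swap ⟨k, by omega⟩ ⟨k+1, hk⟩)) W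
      = φ * (φ * φ ^ KT V W) := by rw [h]; ring
  exact mul_left_cancel₀ (ne_of_gt hφ0) h2

lemma spos_ratio {φ : ℝ} (hφ0 : 0 < φ) (hφ1 : φ ≤ 1) (a : Fin m) (W : Ranking m)
    {k l : ℕ} (hkl : k ≤ l) (hl : l < m) :
    φ ^ l * Spos φ a W k ≤ φ ^ k * Spos φ a W l := by
  induction l, hkl using Nat.le_induction with
  | base => exact le_refl _
  | succ n hn ih =>
    have hn' : n < m := by omega
    have ih' := ih hn'
    calc φ ^ (n+1) * Spos φ a W k = φ * (φ ^ n * Spos φ a W k) := by ring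
      _ ≤ φ * (φ ^ k * Spos φ a W n) := by
          exact mul_le_mul_of_nonneg_left ih' hφ0.le
      _ = φ ^ k * (φ * Spos φ a W n) := by ring
      _ ≤ φ ^ k * Spos φ a W (n+1) :=
          mul_le_mul_of_nonneg_left (spos_succ_ge hφ0 hφ1 a W hl) (pow_nonneg hφ0.le _)

lemma spos_geom {φ : ℝ} (hφ0 : 0 < φ) (a : Fin m) (W : Ranking m) (hW : W ∈ Ltop a)
    {k : ℕ} (hk : k < m) : Spos φ a W k = φ ^ k * Spos φ a W 0 := by
  induction k with
  | zero => simp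
  | succ n ih =>
    rw [spos_succ_eq hφ0 a W hW hk, ih (by omega)]
    ring

lemma spos_zero_pos {φ : ℝ} (hφ0 : 0 < φ) (a : Fin m) (W : Ranking m) :
    0 < Spos φ a W 0 := by
  apply Finset.sum_pos
  · intro V _; exact pow_pos hφ0 _
  · refine ⟨Equiv.swap a ⟨0, a.pos⟩, ?_⟩
    simp [Equiv.swap_apply_left]

lemma sum_spos (φ : ℝ) (a : Fin m) (W : Ranking m) :
    ∑ k ∈ range m, Spos φ a W k = ∑ V : Ranking m, φ ^ KT V W :=
  Finset.sum_fiberwise_of_maps_to (fun V _ => mem_range.mpr (V a).isLt) _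

lemma sum_KT_trans (φ : ℝ) (τ W : Ranking m) :
    ∑ U : Ranking m, φ ^ KT U (τ.trans W) = ∑ U : Ranking m, φ ^ KT U W := by
  apply Fintype.sum_equiv (Equiv.mulRight τ.symm)
  intro U
  show φ ^ KT U (τ.trans W) = φ ^ KT (τ.symm.trans U) W
  rw [KT_untrans]

lemma zpos {φ : ℝ} (hφ0 : 0 < φ) (W : Ranking m) : 0 < ∑ U : Ranking m, φ ^ KT U W :=
  Finset.sum_pos (fun U _ => pow_pos hφ0 _) univ_nonempty

lemma mallows1_trans (φ : ℝ) (τ W V : Ranking m) :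
    mallows1 φ (τ.trans W) V = mallows1 φ W (τ.symm.trans V) := by
  unfold mallows1
  rw [sum_KT_trans]
  congr 1
  rw [KT_untrans]

lemma size_trans (φ : ℝ) (τ : Ranking m) (f : Ranking m → ℝ) (W : Ranking m) :
    Size (mallows1 φ) (fun V => f (τ.trans V)) W = Size (mallows1 φ) f (τ.trans W) := by
  unfold Size
  apply Fintype.sum_equiv (Equiv.mulRight τ)
  intro V
  show mallows1 φ W V * f (τ.trans V) = mallows1 φ (τ.trans W) (τ.trans V) * f (τ.trans V)
  rw [mallows1_trans, ← Equiv.trans_assoc, Equiv.symm_trans_self, Equiv.refl_trans]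

lemma ltop_trans (a : Fin m) (τ : Ranking m) (hτ : τ a = a) (W : Ranking m) :
    τ.trans W ∈ Ltop a ↔ W ∈ Ltop a := by
  rw [ltop_iff, ltop_iff, Equiv.trans_apply, hτ]

lemma mallows1_sum {φ : ℝ} (hφ0 : 0 < φ) (W : Ranking m) :
    ∑ V : Ranking m, mallows1 φ W V = 1 := by
  unfold mallows1
  rw [← Finset.sum_div, div_self (ne_of_gt (zpos hφ0 W))]

lemma mallows1_nonneg {φ : ℝ} (hφ0 : 0 < φ) (W V : Ranking m) : 0 ≤ mallows1 φ W V :=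
  div_nonneg (pow_nonneg hφ0.le _) (zpos hφ0 W).le

lemma size_fiber (φ : ℝ) (a : Fin m) (W : Ranking m) (t : ℕ → ℝ) :
    Size (mallows1 φ) (fun V => t ((V a : ℕ))) W
      = (∑ k ∈ range m, Spos φ a W k * t k) / (∑ U : Ranking m, φ ^ KT U W) := by
  unfold Size mallows1
  rw [Finset.sum_div]
  rw [← Finset.sum_fiberwise_of_maps_to (fun (V : Ranking m) (_ : V ∈ univ) => mem_range.mpr (V a).isLt)
    (fun V => φ ^ KT V W / (∑ U : Ranking m, φ ^ KT U W) * t ((V a : ℕ)))]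
  apply Finset.sum_congr rfl
  intro k _
  rw [Spos, Finset.sum_mul, Finset.sum_div]
  apply Finset.sum_congr rfl
  intro V hV
  simp only [mem_filter, mem_univ, true_and] at hV
  rw [hV]
  ring

lemma borda_eq (a : Fin m) (V : Ranking m) : Borda a V = m - 1 - (V a : ℕ) := by
  unfold Borda
  have : (univ.filter (fun b => V a < V b)).card = (univ.filter (fun c => V a < c)).card := by
    apply Finset.card_nbij' (i := fun b => V b) (j := fun c => V.symm c)
    · intro b hb; simp only [mem_coe, mem_filter, mem_univ, true_and] at hb ⊢; exact hb
    · intro c hc; simp only [mem_coe, mem_filter, mem_univ, true_and,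
        Equiv.apply_symm_apply] at hc ⊢; exact hc
    · intro b _; simp
    · intro c _; simp
  rw [this]
  have : univ.filter (fun c => V a < c) = Finset.Ioi (V a) := by
    ext c; simp [Finset.mem_Ioi]
  rw [this, Fin.card_Ioi]

lemma bordaTest_eq (a : Fin m) (Γ : ℝ) {p₀ : ℕ} (hp : p₀ < m) (V : Ranking m) :
    bordaTest a ((m - 1 - p₀ : ℕ) : ℝ) Γ V
      = (fun k => if k < p₀ then (1:ℝ) else if k = p₀ then Γ else 0) ((V a : ℕ)) := by
  unfold bordaTest
  have hVa : (V a : ℕ) < m := (V a).isLt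
  rw [borda_eq]
  show _ = if ((V a : ℕ)) < p₀ then (1:ℝ) else if (V a : ℕ) = p₀ then Γ else 0
  have hcast : ∀ x y : ℕ, ((x:ℝ) < (y:ℝ) ↔ x < y) := fun x y => Nat.cast_lt
  by_cases h1 : (V a : ℕ) < p₀
  · rw [if_pos (by rw [hcast]; omega), if_pos h1]
  · rw [if_neg (by rw [hcast]; omega)]
    by_cases h2 : (V a : ℕ) = p₀
    · rw [if_neg (by rw [hcast]; omega), if_neg (by omega), if_pos h2]
    · rw [if_pos (by rw [hcast]; omega), if_neg h1, if_neg h2]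

lemma power_conj {φ : ℝ} {α : ℝ} {a : Fin m} {f : Ranking m → ℝ}
    (hf : IsUMP (mallows1 φ) (Ltop a)ᶜ (Ltop a) α f)
    {τ h1 : Ranking m} (hτ : τ a = a) (hh1 : h1 ∈ Ltop a) :
    Power (mallows1 φ) f (τ.trans h1) = Power (mallows1 φ) f h1 := by
  have hh1' : τ.trans h1 ∈ Ltop a := (ltop_trans a τ hτ h1).mpr hh1
  obtain ⟨hftest, hfsize, hfmax⟩ := hf h1 hh1
  obtain ⟨_, _, hfmax'⟩ := hf (τ.trans h1) hh1'
  apply le_antisymm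
  · have hg : IsTest (fun V => f (τ.trans V)) := fun V => hftest (τ.trans V)
    have hgs : SizeLe (mallows1 φ) (Ltop a)ᶜ (fun V => f (τ.trans V)) α := by
      intro h0 hh0
      rw [size_trans]
      exact hfsize (τ.trans h0) (by
        simp only [Set.mem_compl_iff] at hh0 ⊢
        rw [ltop_trans a τ hτ h0]; exact hh0)
    have := hfmax _ hg hgs
    calc Power (mallows1 φ) f (τ.trans h1) = Size (mallows1 φ) f (τ.trans h1) := rfl
      _ = Size (mallows1 φ) (fun V => f (τ.trans V)) h1 := (size_trans φ τ f h1).symm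
      _ = Power (mallows1 φ) (fun V => f (τ.trans V)) h1 := rfl
      _ ≤ Power (mallows1 φ) f h1 := this
  · have hg : IsTest (fun V => f (τ.symm.trans V)) := fun V => hftest (τ.symm.trans V)
    have hτ' : τ.symm a = a := (Equiv.symm_apply_eq τ).mpr hτ.symm
    have hgs : SizeLe (mallows1 φ) (Ltop a)ᶜ (fun V => f (τ.symm.trans V)) α := by
      intro h0 hh0
      rw [size_trans]
      exact hfsize (τ.symm.trans h0) (by
        simp only [Set.mem_compl_iff] at hh0 ⊢
        rw [ltop_trans a τ.symm hτ' h0]; exact hh0)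
    have := hfmax' _ hg hgs
    calc Power (mallows1 φ) f h1 = Size (mallows1 φ) f h1 := rfl
      _ = Size (mallows1 φ) f (τ.symm.trans (τ.trans h1)) := by
          rw [← Equiv.trans_assoc, Equiv.symm_trans_self, Equiv.refl_trans]
      _ = Size (mallows1 φ) (fun V => f (τ.symm.trans V)) (τ.trans h1) :=
          (size_trans φ τ.symm f (τ.trans h1)).symm
      _ = Power (mallows1 φ) (fun V => f (τ.symm.trans V)) (τ.trans h1) := rfl
      _ ≤ Power (mallows1 φ) f (τ.trans h1) := this

lemma power_const {φ : ℝ} {α : ℝ} {a : Fin m} {f : Ranking m → ℝ}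
    (hf : IsUMP (mallows1 φ) (Ltop a)ᶜ (Ltop a) α f)
    {h1 h1' : Ranking m} (hh1 : h1 ∈ Ltop a) (hh1' : h1' ∈ Ltop a) :
    Power (mallows1 φ) f h1' = Power (mallows1 φ) f h1 := by
  set τ : Ranking m := h1'.trans h1.symm with hτdef
  have hτ : τ a = a := by
    have e : h1' a = h1 a := by
      rw [← Fin.val_eq_val, (ltop_iff a h1').mp hh1', (ltop_iff a h1).mp hh1]
    show h1.symm (h1' a) = a
    rw [e, Equiv.symm_apply_apply]
  have heq : τ.trans h1 = h1' := by
    ext b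
    rw [Fin.val_eq_val]
    show h1 (h1.symm (h1' b)) = h1' b
    rw [Equiv.apply_symm_apply]
  rw [← heq]
  exact power_conj hf hτ hh1

noncomputable def symmTest {m : ℕ} (a : Fin m) (f : Ranking m → ℝ) : Ranking m → ℝ :=
  fun V => (∑ τ ∈ univ.filter (fun τ : Ranking m => τ a = a), f (τ.trans V)) /
    ((univ.filter (fun τ : Ranking m => τ a = a)).card : ℝ)

lemma stab_card_pos (a : Fin m) :
    0 < (((univ.filter (fun τ : Ranking m => τ a = a)).card : ℕ) : ℝ) := by
  have : (Equiv.refl (Fin m)) ∈ univ.filter (fun τ : Ranking m => τ a = a) := by simp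
  exact_mod_cast Finset.card_pos.mpr ⟨_, this⟩

lemma symm_size (φ : ℝ) (a : Fin m) (f : Ranking m → ℝ) (W : Ranking m) :
    Size (mallows1 φ) (symmTest a f) W
      = (∑ τ ∈ univ.filter (fun τ : Ranking m => τ a = a), Size (mallows1 φ) f (τ.trans W)) /
        ((univ.filter (fun τ : Ranking m => τ a = a)).card : ℝ) := by
  have key : ∀ P : Ranking m, mallows1 φ W P * symmTest a f P
      = (∑ τ ∈ univ.filter (fun τ : Ranking m => τ a = a), mallows1 φ W P * f (τ.trans P)) /
        ((univ.filter (fun τ : Ranking m => τ a = a)).card : ℝ) := by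
    intro P
    unfold symmTest
    rw [mul_div_assoc', Finset.mul_sum]
  show ∑ P : Ranking m, mallows1 φ W P * symmTest a f P = _
  rw [Finset.sum_congr rfl (fun P _ => key P), ← Finset.sum_div, Finset.sum_comm]
  congr 1
  apply Finset.sum_congr rfl
  intro τ _
  show Size (mallows1 φ) (fun V => f (τ.trans V)) W = Size (mallows1 φ) f (τ.trans W)
  exact size_trans φ τ f W

lemma symm_test {a : Fin m} {f : Ranking m → ℝ} (hf : IsTest f) : IsTest (symmTest a f) := by
  intro V
  unfold symmTest
  constructor
  · exact div_nonneg (Finset.sum_nonneg fun τ _ => (hf (τ.trans V)).1) (stab_card_pos a).le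
  · rw [div_le_one (stab_card_pos a)]
    calc (∑ τ ∈ univ.filter (fun τ : Ranking m => τ a = a), f (τ.trans V))
        ≤ ∑ τ ∈ univ.filter (fun τ : Ranking m => τ a = a), 1 :=
          Finset.sum_le_sum fun τ _ => (hf (τ.trans V)).2
      _ = ((univ.filter (fun τ : Ranking m => τ a = a)).card : ℝ) := by simp

lemma symm_sizele {φ α : ℝ} {a : Fin m} {f : Ranking m → ℝ}
    (hf : SizeLe (mallows1 φ) (Ltop a)ᶜ f α) (hα : 0 ≤ α) :
    SizeLe (mallows1 φ) (Ltop a)ᶜ (symmTest a f) α := by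
  intro h0 hh0
  rw [symm_size]
  rw [div_le_iff₀ (stab_card_pos a)]
  calc (∑ τ ∈ univ.filter (fun τ : Ranking m => τ a = a), Size (mallows1 φ) f (τ.trans h0))
      ≤ ∑ τ ∈ univ.filter (fun τ : Ranking m => τ a = a), α := by
        apply Finset.sum_le_sum
        intro τ hτ
        simp only [mem_filter, mem_univ, true_and] at hτ
        apply hf
        simp only [Set.mem_compl_iff] at hh0 ⊢
        rw [ltop_trans a τ hτ h0]
        exact hh0
    _ = ((univ.filter (fun τ : Ranking m => τ a = a)).card : ℝ) * α := by
        rw [Finset.sum_const, nsmul_eq_mul]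
    _ = α * ((univ.filter (fun τ : Ranking m => τ a = a)).card : ℝ) := by ring

lemma symm_power {φ α : ℝ} {a : Fin m} {f : Ranking m → ℝ}
    (hf : IsUMP (mallows1 φ) (Ltop a)ᶜ (Ltop a) α f)
    {h1 : Ranking m} (hh1 : h1 ∈ Ltop a) :
    Power (mallows1 φ) (symmTest a f) h1 = Power (mallows1 φ) f h1 := by
  show Size (mallows1 φ) (symmTest a f) h1 = Power (mallows1 φ) f h1
  rw [symm_size]
  have : ∀ τ ∈ univ.filter (fun τ : Ranking m => τ a = a),
      Size (mallows1 φ) f (τ.trans h1) = Power (mallows1 φ) f h1 := by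
    intro τ hτ
    simp only [mem_filter, mem_univ, true_and] at hτ
    exact power_conj hf hτ hh1
  rw [Finset.sum_congr rfl this, Finset.sum_const, nsmul_eq_mul, mul_comm,
    mul_div_assoc, div_self (ne_of_gt (stab_card_pos a)), mul_one]

lemma symm_fiber (a : Fin m) (f : Ranking m → ℝ) {V V' : Ranking m} (h : V a = V' a) :
    symmTest a f V = symmTest a f V' := by
  set σ : Ranking m := V'.trans V.symm with hσdef
  have hσ : σ a = a := by
    show V.symm (V' a) = a
    rw [← h, Equiv.symm_apply_apply]
  have hV' : V' = σ.trans V := by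
    ext b
    rw [Fin.val_eq_val]
    show V' b = V (V.symm (V' b))
    rw [Equiv.apply_symm_apply]
  unfold symmTest
  congr 1
  rw [hV']
  apply Finset.sum_nbij' (i := fun τ : Ranking m => τ.trans σ.symm)
    (j := fun τ : Ranking m => τ.trans σ)
  · intro τ hτ
    simp only [mem_filter, mem_univ, true_and] at hτ ⊢
    show σ.symm (τ a) = a
    rw [hτ, Equiv.symm_apply_eq]
    exact hσ.symm
  · intro τ hτ
    simp only [mem_filter, mem_univ, true_and] at hτ ⊢
    show σ (τ a) = a
    rw [hτ, hσ]
  · intro τ _; simp [Equiv.trans_assoc]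
  · intro τ _; simp [Equiv.trans_assoc]
  · intro τ _
    congr 1
    ext b
    simp

end Stmt17Aux

/-- If a level-`α` UMP test exists for `H₀ = ℒ(𝒜)∖L_{a≻others}` vs
`H₁ = L_{a≻others}`, then some Borda-score threshold test with size at most `α` over `H₀`
is a level-`α` UMP test for `H₀` vs `H₁`. -/
theorem stmt17 (m : ℕ) (φ : ℝ) (hφ0 : 0 < φ) (hφ1 : φ < 1)
    (a : Fin m) (α : ℝ) (hα0 : 0 < α) (hα1 : α < 1)
    (hex : ∃ f : Ranking m → ℝ, IsUMP (mallows1 φ) (Ltop a)ᶜ (Ltop a) α f) :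
    ∃ K Γ : ℝ, 0 ≤ Γ ∧ Γ ≤ 1 ∧
      SizeLe (mallows1 φ) (Ltop a)ᶜ (bordaTest a K Γ) α ∧
      IsUMP (mallows1 φ) (Ltop a)ᶜ (Ltop a) α (bordaTest a K Γ) := by
  classical
  obtain ⟨f, hf⟩ := hex
  have hm : 0 < m := a.pos
  have hφ1' : φ ≤ 1 := hφ1.le
  set h1₀ : Ranking m := Equiv.swap a ⟨0, hm⟩ with hh1₀def
  have hh1₀ : h1₀ ∈ Ltop a := by
    rw [ltop_iff]
    show ((Equiv.swap a ⟨0, hm⟩) a : ℕ) = 0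
    rw [Equiv.swap_apply_left]
  set β : ℝ := Power (mallows1 φ) f h1₀ with hβdef
  obtain ⟨hftest, hfsize, -⟩ := hf h1₀ hh1₀
  have hβ0 : 0 ≤ β :=
    Finset.sum_nonneg fun V _ => mul_nonneg (mallows1_nonneg hφ0 _ _) (hftest V).1
  have hβ1 : β ≤ 1 := by
    calc β ≤ ∑ V : Ranking m, mallows1 φ h1₀ V * 1 :=
        Finset.sum_le_sum fun V _ =>
          mul_le_mul_of_nonneg_left (hftest V).2 (mallows1_nonneg hφ0 _ _)
      _ = 1 := by simp only [mul_one]; exact mallows1_sum hφ0 _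
  -- the quantile construction
  set D : ℝ := ∑ k ∈ range m, φ ^ k with hDdef
  have hD : 0 < D :=
    Finset.sum_pos (fun k _ => pow_pos hφ0 _) (Finset.nonempty_range_iff.mpr (by omega))
  set G : ℕ → ℝ := fun p => ∑ k ∈ range p, φ ^ k with hGdef
  have hGm : G m = D := rfl
  have hGsucc : ∀ p, G (p+1) = G p + φ ^ p := fun p => Finset.sum_range_succ _ p
  have hPex : ∃ p, β * D ≤ G (p+1) := by
    refine ⟨m-1, ?_⟩
    rw [show m-1+1 = m by omega, hGm]
    nlinarith
  set p₀ : ℕ := Nat.find hPex with hp₀def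
  have hp₀m : p₀ < m := by
    have h1 := Nat.find_min' hPex (by
      rw [show m-1+1 = m by omega, hGm]; nlinarith : β * D ≤ G ((m-1)+1))
    omega
  have hupper : β * D ≤ G (p₀ + 1) := Nat.find_spec hPex
  have hlower : G p₀ ≤ β * D := by
    rcases Nat.eq_zero_or_pos p₀ with h0 | hpos
    · rw [h0]
      show (∑ k ∈ range 0, φ ^ k) ≤ β * D
      simp only [Finset.range_zero, Finset.sum_empty]
      exact mul_nonneg hβ0 hD.le
    · have hmin := Nat.find_min hPex (m := p₀ - 1) (by omega)
      rw [show p₀ - 1 + 1 = p₀ by omega] at hmin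
      linarith [not_le.mp hmin]
  have hφp : (0:ℝ) < φ ^ p₀ := pow_pos hφ0 _
  set Γ : ℝ := (β * D - G p₀) / φ ^ p₀ with hΓdef
  have hΓ0 : 0 ≤ Γ := div_nonneg (by linarith) hφp.le
  have hΓ1 : Γ ≤ 1 := by
    rw [hΓdef, div_le_one hφp]
    have := hGsucc p₀
    linarith
  set t : ℕ → ℝ := fun k => if k < p₀ then (1:ℝ) else if k = p₀ then Γ else 0 with htdef
  have ht01 : ∀ k, 0 ≤ t k ∧ t k ≤ 1 := by
    intro k
    simp only [htdef]
    split_ifs <;> constructor <;> linarith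
  have ht_sum : ∑ k ∈ range m, φ ^ k * t k = β * D := by
    have e1 : ∑ k ∈ range m, φ ^ k * t k
        = ∑ k ∈ range (p₀+1), φ ^ k * t k + ∑ k ∈ Finset.Ico (p₀+1) m, φ ^ k * t k := by
      rw [Finset.range_eq_Ico,
        ← Finset.sum_Ico_consecutive (fun k => φ ^ k * t k) (Nat.zero_le (p₀+1))
          (by omega : p₀+1 ≤ m), Finset.range_eq_Ico]

    have e2 : ∑ k ∈ Finset.Ico (p₀+1) m, φ ^ k * t k = 0 := by
      apply Finset.sum_eq_zero
      intro k hk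
      have hk' := Finset.mem_Ico.mp hk
      have : t k = 0 := by
        simp only [htdef]
        rw [if_neg (by omega), if_neg (by omega)]
      rw [this, mul_zero]
    have e3 : ∑ k ∈ range (p₀+1), φ ^ k * t k = G p₀ + φ ^ p₀ * Γ := by
      rw [Finset.sum_range_succ]
      congr 1
      · rw [hGdef]
        apply Finset.sum_congr rfl
        intro k hk
        simp only [htdef]
        rw [if_pos (mem_range.mp hk), mul_one]
      · simp only [htdef]
        split_ifs with h1
        · exact absurd h1 (lt_irrefl _)
        · rfl
    rw [e1, e2, e3, add_zero, hΓdef, mul_div_cancel₀ _ (ne_of_gt hφp)]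
    ring
  set K : ℝ := ((m - 1 - p₀ : ℕ) : ℝ) with hKdef
  have hT : ∀ V : Ranking m, bordaTest a K Γ V = t ((V a : ℕ)) :=
    fun V => bordaTest_eq a Γ hp₀m V
  have hTfun : bordaTest a K Γ = fun V => t ((V a : ℕ)) := funext hT
  -- normalizer decomposition on the alternative
  have hZalt : ∀ h1 ∈ Ltop a, (∑ U : Ranking m, φ ^ KT U h1) = Spos φ a h1 0 * D := by
    intro h1 hh1
    rw [← sum_spos,
      Finset.sum_congr rfl (fun k hk => spos_geom hφ0 a h1 hh1 (mem_range.mp hk)),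
      hDdef, Finset.mul_sum]
    apply Finset.sum_congr rfl
    intro k _
    ring
  have hnumalt : ∀ h1 ∈ Ltop a, ∀ u : ℕ → ℝ,
      (∑ k ∈ range m, Spos φ a h1 k * u k) = Spos φ a h1 0 * ∑ k ∈ range m, φ ^ k * u k := by
    intro h1 hh1 u
    rw [Finset.sum_congr rfl
      (fun k hk => by rw [spos_geom hφ0 a h1 hh1 (mem_range.mp hk)]), Finset.mul_sum]
    apply Finset.sum_congr rfl
    intro k _
    ring
  have hpowT : ∀ h1 ∈ Ltop a, Size (mallows1 φ) (fun V => t ((V a : ℕ))) h1 = β := by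
    intro h1 hh1
    rw [size_fiber, hZalt h1 hh1, hnumalt h1 hh1 t, ht_sum,
      mul_div_mul_left _ _ (ne_of_gt (spos_zero_pos hφ0 a h1)),
      mul_div_assoc, div_self (ne_of_gt hD), mul_one]
  -- the symmetrized test
  set ft := symmTest a f with hftdef
  have hfttest : IsTest ft := symm_test hftest
  have hftsize : SizeLe (mallows1 φ) (Ltop a)ᶜ ft α := symm_sizele hfsize hα0.le
  have hftpow : Power (mallows1 φ) ft h1₀ = β := symm_power hf hh1₀
  set g : ℕ → ℝ := fun k => if h : k < m then ft (Equiv.swap a ⟨k, h⟩) else 0 with hgdef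
  have hg : ∀ V : Ranking m, ft V = g ((V a : ℕ)) := by
    intro V
    have hlt : (V a : ℕ) < m := (V a).isLt
    simp only [hgdef]
    rw [dif_pos hlt]
    have heq : (Equiv.swap a ⟨(V a : ℕ), hlt⟩) a = V a := by
      rw [Equiv.swap_apply_left]
    exact symm_fiber a f heq.symm
  have hg01 : ∀ k, 0 ≤ g k ∧ g k ≤ 1 := by
    intro k
    simp only [hgdef]
    split_ifs with h
    · exact hfttest _
    · norm_num
  have hgft : (fun V : Ranking m => g ((V a : ℕ))) = ft := funext fun V => (hg V).symm
  have hg_sum : ∑ k ∈ range m, φ ^ k * g k = β * D := by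
    have h2 : Size (mallows1 φ) (fun V => g ((V a : ℕ))) h1₀ = β := by
      rw [hgft]
      exact hftpow
    rw [size_fiber, hZalt h1₀ hh1₀, hnumalt h1₀ hh1₀ g,
      mul_div_mul_left _ _ (ne_of_gt (spos_zero_pos hφ0 a h1₀))] at h2
    exact (div_eq_iff (ne_of_gt hD)).mp h2
  -- the core exchange argument
  have hsize_le : ∀ h0 ∈ (Ltop a)ᶜ, Size (mallows1 φ) (fun V => t ((V a : ℕ))) h0 ≤ α := by
    intro h0 hh0
    have hkey : ∀ k ∈ range m,
        φ ^ p₀ * (Spos φ a h0 k * t k) + Spos φ a h0 p₀ * (φ ^ k * g k)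
        ≤ φ ^ p₀ * (Spos φ a h0 k * g k) + Spos φ a h0 p₀ * (φ ^ k * t k) := by
      intro k hk
      have hkm := mem_range.mp hk
      have hgk0 := (hg01 k).1
      have hgk1 := (hg01 k).2
      rcases lt_trichotomy k p₀ with hlt | heq | hgt
      · have hr : φ ^ p₀ * Spos φ a h0 k ≤ φ ^ k * Spos φ a h0 p₀ :=
          spos_ratio hφ0 hφ1' a h0 hlt.le hp₀m
        have htk : t k = 1 := by simp only [htdef]; rw [if_pos hlt]
        rw [htk]
        nlinarith [mul_le_mul_of_nonneg_left hr (sub_nonneg.mpr hgk1)]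
      · have htk : t k = Γ := by
          simp only [htdef]
          rw [if_neg (by omega), if_pos heq]
        rw [htk, heq]
        exact le_of_eq (by ring)
      · have hr : φ ^ k * Spos φ a h0 p₀ ≤ φ ^ p₀ * Spos φ a h0 k :=
          spos_ratio hφ0 hφ1' a h0 hgt.le hkm
        have htk : t k = 0 := by simp only [htdef]; rw [if_neg (by omega), if_neg (by omega)]
        rw [htk]
        nlinarith [mul_le_mul_of_nonneg_left hr hgk0]
    have hsum := Finset.sum_le_sum hkey
    rw [Finset.sum_add_distrib, Finset.sum_add_distrib, ← Finset.mul_sum, ← Finset.mul_sum,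
      ← Finset.mul_sum, ← Finset.mul_sum, ht_sum, hg_sum] at hsum
    have hmain : ∑ k ∈ range m, Spos φ a h0 k * t k ≤ ∑ k ∈ range m, Spos φ a h0 k * g k :=
      (mul_le_mul_iff_right₀ hφp).mp (by linarith)
    calc Size (mallows1 φ) (fun V => t ((V a : ℕ))) h0
        = (∑ k ∈ range m, Spos φ a h0 k * t k) / (∑ U : Ranking m, φ ^ KT U h0) :=
          size_fiber φ a h0 t
      _ ≤ (∑ k ∈ range m, Spos φ a h0 k * g k) / (∑ U : Ranking m, φ ^ KT U h0) := by
          exact div_le_div_of_nonneg_right hmain (zpos hφ0 h0).le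
      _ = Size (mallows1 φ) (fun V => g ((V a : ℕ))) h0 := (size_fiber φ a h0 g).symm
      _ = Size (mallows1 φ) ft h0 := by rw [hgft]
      _ ≤ α := hftsize h0 hh0
  refine ⟨K, Γ, hΓ0, hΓ1, ?_, ?_⟩
  · intro h0 hh0
    rw [hTfun]
    exact hsize_le h0 hh0
  · intro h1 hh1
    refine ⟨?_, ?_, ?_⟩
    · intro V
      rw [hT V]
      exact ht01 _
    · intro h0 hh0
      rw [hTfun]
      exact hsize_le h0 hh0
    · intro g' hg't hg's
      have hle := (hf h1 hh1).2.2 g' hg't hg's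
      have hpf : Power (mallows1 φ) f h1 = β := power_const hf hh1₀ hh1
      have hpT : Power (mallows1 φ) (bordaTest a K Γ) h1 = β := by
        show Size (mallows1 φ) (bordaTest a K Γ) h1 = β
        rw [hTfun]
        exact hpowT h1 hh1
      rw [hpT]
      rw [hpf] at hle
      exact hle


end Voting
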